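/- Let q be a prime power, let m ≥ 2, and let Φ be a monic q-anti-palindromic q-polynomial of q-degree 2m in F_q[x] (in particular the coefficient of x^{q^m} in Φ is zero). Let f be the unique monic polynomial of degree q^{m-1}(q^m+1) in F_q[x] with f(0)=0 and f^q - f = x^{q^m}·Φ. Let L(x) = Φ(x) + t^q·x^{q^{m+1}} - t·x^{q^{m-1}} in F_q(t)[x], let E be a splitting field of L over F_q(t), let V be the F_q-space of roots of L in E, and let G = Gal(E/F_q(t)). Define Q : V → E by Q(α) = t·α^{q^m + q^{m-1}} + f(α). Then: (i) Q(α) lies in the subfield F_q of E for every α in V; (ii) Q(λα) = λ^2 Q(α) for all λ in F_q and α in V, and C(α,β) := Q(α+β) - Q(α) - Q(β) is a symmetric F_q-bilinear form on V with values in F_q (alternating when q is even); (iii) C is nondegenerate on V; and (iv) Q is G-invariant: Q(σ(α)) = Q(α) for all σ in G and α in V. In other words, Q is a nondegenerate G-invariant F_q-valued quadratic form on V. -/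
import Mathlib


open Polynomial

private lemma aux_sum_split {A : Type*} [AddCommMonoid A] (M : ℕ) (g : ℕ → A) :
    ∑ i ∈ Finset.range (2 * M + 1), g i
      = g M + ∑ d ∈ Finset.Ico 1 (M + 1), (g (M + d) + g (M - d)) := by
  have h1 : ∑ d ∈ Finset.Ico 1 (M + 1), g (M + d)
      = ∑ i ∈ Finset.Ico (M + 1) (2 * M + 1), g i := by
    refine Finset.sum_nbij' (fun d => M + d) (fun i => i - M) ?_ ?_ ?_ ?_ ?_ <;>
      intros a ha <;> simp only [Finset.mem_Ico] at * <;> first | rfl | omega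
  have h2 : ∑ d ∈ Finset.Ico 1 (M + 1), g (M - d)
      = ∑ i ∈ Finset.Ico 0 M, g i := by
    refine Finset.sum_nbij' (fun d => M - d) (fun i => M - i) ?_ ?_ ?_ ?_ ?_ <;>
      intros a ha <;> simp only [Finset.mem_Ico] at * <;> first | rfl | omega
  rw [Finset.sum_add_distrib, h1, h2]
  rw [Finset.range_eq_Ico, ← Finset.sum_Ico_consecutive g (Nat.zero_le M) (by omega : M ≤ 2 * M + 1)]
  rw [Finset.sum_eq_sum_Ico_succ_bot (by omega : M < 2 * M + 1)]
  abel

set_option maxHeartbeats 1600000 in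
theorem stmt_18 (Fq : Type*) [Field Fq] [Fintype Fq] (q : ℕ) (hq : Fintype.card Fq = q)
    (m : ℕ) (hm : 2 ≤ m) (c : ℕ → Fq)
    (hc2m : c (2 * m) = 1) (hcap : ∀ i ≤ m, c i = - c (2 * m - i)) (hcm : c m = 0)
    (Φ : Polynomial Fq)
    (hΦ : Φ = ∑ i ∈ Finset.range (2 * m + 1), C (c i) * X ^ (q ^ i))
    (f : Polynomial Fq) (hfmonic : f.Monic)
    (hfdeg : f.natDegree = q ^ (m - 1) * (q ^ m + 1)) (hf0 : f.eval 0 = 0)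
    (hf : f ^ q - f = X ^ (q ^ m) * Φ)
    (L : Polynomial (RatFunc Fq))
    (hL : L = Φ.map (algebraMap Fq (RatFunc Fq))
      + Polynomial.C (RatFunc.X ^ q) * X ^ (q ^ (m + 1))
      - Polynomial.C RatFunc.X * X ^ (q ^ (m - 1)))
    (E : Type*) [Field E] [Algebra (RatFunc Fq) E]
    [Algebra Fq E] [IsScalarTower Fq (RatFunc Fq) E]
    (hE : Polynomial.IsSplittingField (RatFunc Fq) E L)
    (V : Submodule Fq E) (hV : (V : Set E) = L.rootSet E)
    (Q : E → E)
    (hQ : ∀ α : E, Q α = algebraMap (RatFunc Fq) E RatFunc.X * α ^ (q ^ m + q ^ (m - 1))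
      + Polynomial.aeval α f)
    (Cf : E → E → E)
    (hCf : ∀ α β : E, Cf α β = Q (α + β) - Q α - Q β) :
    (∀ α ∈ V, Q α ∈ Set.range (algebraMap Fq E)) ∧
    (∀ (a : Fq), ∀ α ∈ V, Q (a • α) = (a ^ 2 : Fq) • Q α) ∧
    (∀ α ∈ V, ∀ β ∈ V, ∀ γ ∈ V, Cf (α + β) γ = Cf α γ + Cf β γ) ∧
    (∀ (a : Fq), ∀ α ∈ V, ∀ β ∈ V, Cf (a • α) β = a • Cf α β) ∧
    (∀ α ∈ V, ∀ β ∈ V, Cf α β = Cf β α) ∧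
    (∀ α ∈ V, ∀ β ∈ V, Cf α β ∈ Set.range (algebraMap Fq E)) ∧
    (Even q → ∀ α ∈ V, Cf α α = 0) ∧
    (∀ α ∈ V, (∀ β ∈ V, Cf α β = 0) → α = 0) ∧
    (∀ σ : E ≃ₐ[RatFunc Fq] E, ∀ α ∈ V, Q (σ α) = Q α) := by
  classical
  -- characteristic setup
  obtain ⟨p, hpc⟩ : ∃ p, CharP Fq p := CharP.exists Fq
  haveI := hpc
  obtain ⟨n, hp, hcard⟩ := FiniteField.card Fq p
  haveI : Fact p.Prime := ⟨hp⟩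
  have hqpn : q = p ^ (n : ℕ) := by rw [← hq, hcard]
  haveI hCE : CharP E p := charP_of_injective_algebraMap (algebraMap Fq E).injective p
  haveI hCR : CharP (RatFunc Fq) p :=
    charP_of_injective_algebraMap (algebraMap Fq (RatFunc Fq)).injective p
  have hq2 : 2 ≤ q := by rw [← hq]; exact Fintype.one_lt_card
  have hq1 : 1 < q := hq2
  have hq0 : q ≠ 0 := by omega
  set φ : Fq →+* E := (algebraMap Fq E) with hφ
  set t : E := algebraMap (RatFunc Fq) E RatFunc.X with ht
  -- Frobenius facts
  have frobE : ∀ x y : E, (x + y) ^ q = x ^ q + y ^ q := by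
    intro x y; rw [hqpn]; exact add_pow_char_pow x y p (n:ℕ)
  have frobEj : ∀ (x y : E) (j : ℕ), (x + y) ^ q ^ j = x ^ q ^ j + y ^ q ^ j := by
    intro x y j; rw [hqpn, ← pow_mul]; exact add_pow_char_pow x y p ((n:ℕ)*j)
  have aq : ∀ a : Fq, a ^ q = a := by intro a; rw [← hq]; exact FiniteField.pow_card a
  have aqj : ∀ (a : Fq) (j : ℕ), a ^ q ^ j = a := by
    intro a j; rw [← hq]; exact FiniteField.pow_card_pow j a
  -- the explicit formula for f
  set F : Polynomial Fq := ∑ d ∈ Finset.Ico 1 (m + 1),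
      C (c (m + d)) * ∑ k ∈ Finset.Ico (m - d) m, X ^ (q ^ k + q ^ (k + d)) with hFdef
  haveI : ExpChar (Polynomial Fq) p := by
    haveI : CharP (Polynomial Fq) p := by infer_instance
    exact ExpChar.prime hp
  have sumpow : ∀ (s : Finset ℕ) (g : ℕ → Polynomial Fq),
      (∑ i ∈ s, g i) ^ q = ∑ i ∈ s, g i ^ q := by
    intro s g; rw [hqpn]; exact sum_pow_char_pow p (n : ℕ) s g
  have hCpow : ∀ a : Fq, (C a : Polynomial Fq) ^ q = C a := by
    intro a; rw [← map_pow, aq]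
  have hpowlt : ∀ i j : ℕ, i < j → q ^ i < q ^ j := fun i j h => Nat.pow_lt_pow_right hq1 h
  have hFq : F ^ q - F = X ^ (q ^ m) * Φ := by
    have hstep1 : F ^ q = ∑ d ∈ Finset.Ico 1 (m + 1),
        C (c (m + d)) * ∑ k ∈ Finset.Ico (m - d) m, X ^ (q ^ (k + 1) + q ^ (k + d + 1)) := by
      rw [hFdef, sumpow]
      refine Finset.sum_congr rfl fun d _ => ?_
      rw [mul_pow, hCpow, sumpow]
      refine congrArg _ (Finset.sum_congr rfl fun k _ => ?_)
      rw [← pow_mul, add_mul, ← pow_succ, ← pow_succ]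
    have htel : ∀ d ∈ Finset.Ico 1 (m + 1),
        (∑ k ∈ Finset.Ico (m - d) m, (X : Polynomial Fq) ^ (q ^ (k + 1) + q ^ (k + d + 1)))
          - ∑ k ∈ Finset.Ico (m - d) m, (X : Polynomial Fq) ^ (q ^ k + q ^ (k + d))
        = X ^ (q ^ m + q ^ (m + d)) - X ^ (q ^ (m - d) + q ^ m) := by
      intro d hd
      simp only [Finset.mem_Ico] at hd
      have h1 : ∑ k ∈ Finset.Ico (m - d) m, (X : Polynomial Fq) ^ (q ^ (k + 1) + q ^ (k + d + 1))
          = ∑ k ∈ Finset.Ico (m - d + 1) (m + 1), (X : Polynomial Fq) ^ (q ^ k + q ^ (k + d)) := by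
        refine Finset.sum_nbij' (fun k => k + 1) (fun k => k - 1) ?_ ?_ ?_ ?_ ?_
        · intro a ha; simp only [Finset.mem_Ico] at *; omega
        · intro a ha; simp only [Finset.mem_Ico] at *; omega
        · intro a ha; show a + 1 - 1 = a; omega
        · intro a ha; simp only [Finset.mem_Ico] at ha; show a - 1 + 1 = a; omega
        · intro a ha; rw [show a + 1 + d = a + d + 1 from by omega]
      rw [h1, Finset.sum_Ico_succ_top (by omega : m - d + 1 ≤ m),
        Finset.sum_eq_sum_Ico_succ_bot (by omega : m - d < m)]
      rw [show m - d + d = m from by omega]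
      abel
    have hRHS : X ^ (q ^ m) * Φ = ∑ i ∈ Finset.range (2 * m + 1), C (c i) * X ^ (q ^ m + q ^ i) := by
      rw [hΦ, Finset.mul_sum]
      refine Finset.sum_congr rfl fun i _ => ?_
      rw [pow_add]; ring
    rw [hstep1, hFdef, ← Finset.sum_sub_distrib]
    rw [hRHS, aux_sum_split m (fun i => C (c i) * X ^ (q ^ m + q ^ i)), hcm]
    simp only [map_zero, zero_mul, zero_add]
    refine Finset.sum_congr rfl fun d hd => ?_
    simp only [Finset.mem_Ico] at hd
    have hneg : c (m - d) = - c (m + d) := by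
      have h := hcap (m - d) (by omega)
      rw [show 2 * m - (m - d) = m + d by omega] at h
      exact h
    rw [← mul_sub, htel d (by simp only [Finset.mem_Ico]; omega), hneg, map_neg,
      show q ^ (m - d) + q ^ m = q ^ m + q ^ (m - d) from add_comm _ _]
    ring
  have hfF : f = F := by
    have hD : (f - F) ^ q = f - F := by
      have h1 : f ^ q - F ^ q = f - F := by
        have h2 : f ^ q - f = F ^ q - F := by rw [hf, hFq]
        linear_combination h2
      have h3 : (f - F) ^ q = f ^ q - F ^ q := by
        rw [hqpn]; exact sub_pow_char_pow f F (n : ℕ)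
      rw [h3, h1]
    have hdeg : (f - F).natDegree = 0 := by
      have h2 := Polynomial.natDegree_pow (f - F) q
      rw [hD] at h2
      rcases Nat.eq_zero_or_pos (f - F).natDegree with h | h
      · exact h
      · nlinarith [h2, hq2]
    obtain ⟨a, ha⟩ := Polynomial.natDegree_eq_zero.mp hdeg
    have hF0 : eval 0 F = 0 := by
      rw [hFdef, eval_finset_sum]
      apply Finset.sum_eq_zero
      intro d _
      rw [eval_mul, eval_finset_sum, Finset.sum_eq_zero, mul_zero]
      intro k _
      rw [eval_pow, eval_X]
      have : 0 < q ^ k := pow_pos (by omega) k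
      exact zero_pow (by omega)
    have hev : eval 0 (f - F) = 0 := by rw [eval_sub, hf0, hF0, sub_zero]
    have : f - F = 0 := by rw [← ha, eval_C] at hev; rw [← ha, hev, map_zero]
    have := sub_eq_zero.mp this
    exact this
  -- value of Q
  have QForm : ∀ x : E, Q x = t * (x ^ q ^ m * x ^ q ^ (m - 1))
      + ∑ d ∈ Finset.Ico 1 (m + 1), φ (c (m + d)) *
        ∑ k ∈ Finset.Ico (m - d) m, x ^ q ^ k * x ^ q ^ (k + d) := by
    intro x
    rw [hQ x, hfF, hFdef]
    congr 1
    · rw [pow_add]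
    · rw [map_sum]
      refine Finset.sum_congr rfl fun d _ => ?_
      rw [map_mul, aeval_C, map_sum]
      congr 1
      refine Finset.sum_congr rfl fun k _ => ?_
      rw [map_pow, aeval_X, pow_add]
  -- value of Cf
  have CfForm : ∀ x y : E, Cf x y
      = t * (x ^ q ^ m * y ^ q ^ (m - 1) + x ^ q ^ (m - 1) * y ^ q ^ m)
      + ∑ d ∈ Finset.Ico 1 (m + 1), φ (c (m + d)) *
        ∑ k ∈ Finset.Ico (m - d) m,
          (x ^ q ^ k * y ^ q ^ (k + d) + x ^ q ^ (k + d) * y ^ q ^ k) := by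
    intro x y
    rw [hCf, QForm, QForm, QForm]
    have expand : ∀ d ∈ Finset.Ico 1 (m + 1),
        algebraMap Fq E (c (m + d)) *
            ∑ k ∈ Finset.Ico (m - d) m, (x + y) ^ q ^ k * (x + y) ^ q ^ (k + d)
        = (algebraMap Fq E (c (m + d)) *
              ∑ k ∈ Finset.Ico (m - d) m, x ^ q ^ k * x ^ q ^ (k + d))
          + ((algebraMap Fq E (c (m + d)) *
              ∑ k ∈ Finset.Ico (m - d) m, y ^ q ^ k * y ^ q ^ (k + d))
          + (algebraMap Fq E (c (m + d)) *
              ∑ k ∈ Finset.Ico (m - d) m,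
                (x ^ q ^ k * y ^ q ^ (k + d) + x ^ q ^ (k + d) * y ^ q ^ k))) := by
      intro d _
      rw [← mul_add, ← mul_add, ← Finset.sum_add_distrib, ← Finset.sum_add_distrib]
      refine congrArg _ (Finset.sum_congr rfl fun k _ => ?_)
      rw [frobEj, frobEj]
      ring
    rw [Finset.sum_congr rfl expand, Finset.sum_add_distrib, Finset.sum_add_distrib,
      frobEj, frobEj]
    ring
  -- membership
  have hmemV : ∀ x : E, x ∈ V ↔ x ∈ L.rootSet E := by
    intro x
    constructor
    · intro hx; rw [← hV]; exact hx
    · intro hx; have : x ∈ (V : Set E) := by rw [hV]; exact hx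
      exact this
  -- fixed points of q-power Frobenius are exactly F_q
  have hfix : ∀ x : E, x ^ q = x → x ∈ Set.range (algebraMap Fq E) := by
    intro x hx
    by_contra hxr
    have hinj : Function.Injective (algebraMap Fq E) := (algebraMap Fq E).injective
    set s : Finset E := Finset.univ.image (algebraMap Fq E) with hs
    have hxs : x ∉ s := by
      intro hxm
      rcases Finset.mem_image.mp hxm with ⟨a, _, ha⟩
      exact hxr ⟨a, ha⟩
    have hcards : (insert x s).card = q + 1 := by
      rw [Finset.card_insert_of_notMem hxs, hs, Finset.card_image_of_injective _ hinj,
        Finset.card_univ, hq]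
    have hzero : ((X : Polynomial E) ^ q - X) = 0 := by
      apply Polynomial.eq_zero_of_natDegree_lt_card_of_eval_eq_zero' _ (insert x s)
      · intro y hy
        rcases Finset.mem_insert.mp hy with rfl | hy
        · simp [hx]
        · rcases Finset.mem_image.mp hy with ⟨a, _, rfl⟩
          simp [← map_pow, aq]
      · rw [hcards, FiniteField.X_pow_card_sub_X_natDegree_eq E hq1]
        omega
    exact FiniteField.X_pow_card_sub_X_ne_zero E hq1 hzero
  -- (i) : Q takes values in F_q on V
  have hQval : ∀ α ∈ V, Q α ∈ Set.range (algebraMap Fq E) := by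
    intro α hα
    have hroot : Polynomial.aeval α L = 0 := by
      have h := (hmemV α).mp hα
      rw [Polynomial.mem_rootSet] at h
      exact h.2
    apply hfix
    have hfq : f ^ q = f + X ^ (q ^ m) * Φ := by linear_combination hf
    have h1 : (Polynomial.aeval α f : E) ^ q = Polynomial.aeval α f + α ^ q ^ m * Polynomial.aeval α Φ := by
      rw [← map_pow, hfq, map_add, map_mul, map_pow, aeval_X]
    rw [hL] at hroot
    simp only [map_add, map_sub, map_mul, map_pow, aeval_C, aeval_X,
      aeval_map_algebraMap] at hroot
    have he : (q ^ m + q ^ (m - 1)) * q = q ^ (m + 1) + q ^ m := by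
      rw [add_mul, ← pow_succ, ← pow_succ, Nat.sub_add_cancel (by omega : 1 ≤ m)]
    rw [hQ α, frobE, mul_pow, ← pow_mul, he, h1, pow_add, pow_add]
    linear_combination α ^ q ^ m * hroot
  -- (ii) scaling, for all of E
  have hj : ∀ (a : Fq) (x : E) (j : ℕ),
      (algebraMap Fq E a * x) ^ q ^ j = algebraMap Fq E a * x ^ q ^ j := by
    intro a x j; rw [mul_pow, ← map_pow, aqj]
  have hsc : ∀ (a : Fq) (α : E), Q (a • α) = (a ^ 2 : Fq) • Q α := by
    intro a α
    rw [Algebra.smul_def, Algebra.smul_def, QForm, QForm]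
    simp only [hj]
    rw [map_pow, mul_add, Finset.mul_sum]
    congr 1
    · ring
    · refine Finset.sum_congr rfl fun d _ => ?_
      rw [Finset.mul_sum, Finset.mul_sum, Finset.mul_sum]
      refine Finset.sum_congr rfl fun k _ => ?_
      ring
  -- bilinearity
  have hadd : ∀ x x' y : E, Cf (x + x') y = Cf x y + Cf x' y := by
    intro x x' y
    rw [CfForm, CfForm, CfForm]
    simp only [frobEj]
    have expand : ∀ d ∈ Finset.Ico 1 (m + 1),
        algebraMap Fq E (c (m + d)) *
            ∑ k ∈ Finset.Ico (m - d) m,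
              ((x ^ q ^ k + x' ^ q ^ k) * y ^ q ^ (k + d)
                + (x ^ q ^ (k + d) + x' ^ q ^ (k + d)) * y ^ q ^ k)
        = (algebraMap Fq E (c (m + d)) *
              ∑ k ∈ Finset.Ico (m - d) m,
                (x ^ q ^ k * y ^ q ^ (k + d) + x ^ q ^ (k + d) * y ^ q ^ k))
          + (algebraMap Fq E (c (m + d)) *
              ∑ k ∈ Finset.Ico (m - d) m,
                (x' ^ q ^ k * y ^ q ^ (k + d) + x' ^ q ^ (k + d) * y ^ q ^ k)) := by
      intro d _
      rw [← mul_add, ← Finset.sum_add_distrib]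
      refine congrArg _ (Finset.sum_congr rfl fun k _ => ?_)
      ring
    rw [Finset.sum_congr rfl expand, Finset.sum_add_distrib]
    ring
  have hsmul : ∀ (a : Fq) (x y : E), Cf (a • x) y = a • Cf x y := by
    intro a x y
    rw [Algebra.smul_def, Algebra.smul_def, CfForm, CfForm]
    simp only [hj]
    conv_rhs => rw [mul_add, Finset.mul_sum]
    congr 1
    · ring
    · refine Finset.sum_congr rfl fun d _ => ?_
      rw [Finset.mul_sum, Finset.mul_sum, Finset.mul_sum]
      refine Finset.sum_congr rfl fun k _ => ?_
      ring
  have hsymm : ∀ x y : E, Cf x y = Cf y x := by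
    intro x y; rw [hCf, hCf, add_comm x y]; ring
  -- nondegeneracy
  -- degree and separability of L
  have hcast : ∀ i : ℕ, 1 ≤ i → ((q ^ i : ℕ) : RatFunc Fq) = 0 := by
    intro i hi
    rw [CharP.cast_eq_zero_iff (RatFunc Fq) p]
    refine dvd_trans ?_ (dvd_pow_self q (by omega : i ≠ 0))
    rw [hqpn]
    exact dvd_pow_self p n.ne_zero
  have hΦmap : Φ.map (algebraMap Fq (RatFunc Fq)) = X ^ (q ^ (2 * m)) +
      ∑ i ∈ Finset.range (2 * m), Polynomial.C (algebraMap Fq (RatFunc Fq) (c i)) * X ^ (q ^ i) := by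
    rw [hΦ, Polynomial.map_sum, Finset.sum_range_succ]
    simp only [Polynomial.map_mul, Polynomial.map_C, Polynomial.map_pow, Polynomial.map_X]
    rw [hc2m, map_one, Polynomial.C_1, one_mul, add_comm]
  have hR : L = X ^ (q ^ (2 * m)) +
      (∑ i ∈ Finset.range (2 * m), Polynomial.C (algebraMap Fq (RatFunc Fq) (c i)) * X ^ (q ^ i)
        + Polynomial.C (RatFunc.X ^ q) * X ^ (q ^ (m + 1))
        - Polynomial.C RatFunc.X * X ^ (q ^ (m - 1))) := by
    rw [hL, hΦmap]; ring
  have hLdeg : L.natDegree = q ^ (2 * m) := by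
    rw [hR]
    have hb : (∑ i ∈ Finset.range (2 * m), Polynomial.C (algebraMap Fq (RatFunc Fq) (c i)) * X ^ (q ^ i)
        + Polynomial.C (RatFunc.X ^ q) * X ^ (q ^ (m + 1))
        - Polynomial.C RatFunc.X * X ^ (q ^ (m - 1))).natDegree
        < ((X : Polynomial (RatFunc Fq)) ^ (q ^ (2 * m))).natDegree := by
      rw [natDegree_X_pow]
      refine lt_of_le_of_lt ?_ (hpowlt (2 * m - 1) (2 * m) (by omega))
      refine (natDegree_sub_le _ _).trans (max_le ((natDegree_add_le _ _).trans (max_le ?_ ?_)) ?_)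
      · refine Polynomial.natDegree_sum_le_of_forall_le _ _ fun i hi => ?_
        simp only [Finset.mem_range] at hi
        refine (natDegree_C_mul_le _ _).trans ?_
        rw [natDegree_X_pow]
        exact Nat.pow_le_pow_right (by omega) (by omega)
      · refine (natDegree_C_mul_le _ _).trans ?_
        rw [natDegree_X_pow]
        exact Nat.pow_le_pow_right (by omega) (by omega)
      · refine (natDegree_C_mul_le _ _).trans ?_
        rw [natDegree_X_pow]
        exact Nat.pow_le_pow_right (by omega) (by omega)
    rw [natDegree_add_eq_left_of_natDegree_lt hb, natDegree_X_pow]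
  have hder : derivative L = Polynomial.C (algebraMap Fq (RatFunc Fq) (c 0)) := by
    have h1 : derivative (Φ.map (algebraMap Fq (RatFunc Fq)))
        = Polynomial.C (algebraMap Fq (RatFunc Fq) (c 0)) := by
      rw [hΦ, Polynomial.map_sum, derivative_sum]
      rw [Finset.sum_eq_single 0]
      · simp only [Polynomial.map_mul, Polynomial.map_C, Polynomial.map_pow, Polynomial.map_X,
          derivative_C_mul, derivative_X_pow, pow_zero, pow_one, Nat.cast_one]
        simp
      · intro i _ hi
        simp only [Polynomial.map_mul, Polynomial.map_C, Polynomial.map_pow, Polynomial.map_X,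
          derivative_C_mul, derivative_X_pow]
        rw [hcast i (by omega), map_zero, zero_mul, mul_zero]
      · intro h
        exact absurd (Finset.mem_range.mpr (by omega)) h
    rw [hL, derivative_sub, derivative_add, h1]
    have h2 : derivative (Polynomial.C (RatFunc.X ^ q) * (X : Polynomial (RatFunc Fq)) ^ q ^ (m + 1)) = 0 := by
      rw [derivative_C_mul, derivative_X_pow, hcast (m + 1) (by omega), map_zero, zero_mul, mul_zero]
    have h3 : derivative (Polynomial.C RatFunc.X * (X : Polynomial (RatFunc Fq)) ^ q ^ (m - 1)) = 0 := by
      rw [derivative_C_mul, derivative_X_pow, hcast (m - 1) (by omega), map_zero, zero_mul, mul_zero]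
    rw [h2, h3]
    ring
  have hc0 : c 0 = -1 := by
    have h := hcap 0 (by omega)
    rw [Nat.sub_zero, hc2m] at h
    exact h
  have hLsep : L.Separable := by
    refine ⟨0, Polynomial.C (algebraMap Fq (RatFunc Fq) (c 0)), ?_⟩
    rw [hder, zero_mul, zero_add, ← Polynomial.C_mul, ← map_mul, hc0]
    norm_num
  have hcardroot : (L.rootSet E).toFinset.card = q ^ (2 * m) := by
    rw [Set.toFinset_card, Polynomial.card_rootSet_eq_natDegree hLsep hE.splits, hLdeg]
  have hnd : ∀ α ∈ V, (∀ β ∈ V, Cf α β = 0) → α = 0 := by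
    intro α hα h0
    set B : Polynomial E :=
      Polynomial.C (algebraMap (RatFunc Fq) E RatFunc.X * α ^ q ^ m) * X ^ q ^ (m - 1)
      + Polynomial.C (algebraMap (RatFunc Fq) E RatFunc.X * α ^ q ^ (m - 1)) * X ^ q ^ m
      + ∑ d ∈ Finset.Ico 1 (m + 1), Polynomial.C (algebraMap Fq E (c (m + d))) *
          ∑ k ∈ Finset.Ico (m - d) m,
            (Polynomial.C (α ^ q ^ (k + d)) * X ^ q ^ k
              + Polynomial.C (α ^ q ^ k) * X ^ q ^ (k + d)) with hB
    have hBeval : ∀ β : E, B.eval β = Cf α β := by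
      intro β
      rw [CfForm]
      simp only [hB, eval_add, eval_mul, eval_pow, eval_C, eval_X, eval_finset_sum]
      congr 1
      · ring
      · refine Finset.sum_congr rfl fun d _ => ?_
        congr 1
        refine Finset.sum_congr rfl fun k _ => ?_
        ring
    have hBzero : B = 0 := by
      apply Polynomial.eq_zero_of_natDegree_lt_card_of_eval_eq_zero' B (L.rootSet E).toFinset
      · intro y hy
        rw [hBeval]
        exact h0 y ((hmemV y).mpr (Set.mem_toFinset.mp hy))
      · rw [hcardroot]
        refine lt_of_le_of_lt ?_ (hpowlt (2 * m - 1) (2 * m) (by omega))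
        rw [hB]
        refine (natDegree_add_le _ _).trans
          (max_le ((natDegree_add_le _ _).trans (max_le ?_ ?_)) ?_)
        · refine (natDegree_C_mul_le _ _).trans ?_
          rw [natDegree_X_pow]
          exact Nat.pow_le_pow_right (by omega) (by omega)
        · refine (natDegree_C_mul_le _ _).trans ?_
          rw [natDegree_X_pow]
          exact Nat.pow_le_pow_right (by omega) (by omega)
        · refine Polynomial.natDegree_sum_le_of_forall_le _ _ fun d hd => ?_
          refine (natDegree_C_mul_le _ _).trans ?_
          refine Polynomial.natDegree_sum_le_of_forall_le _ _ fun k hk => ?_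
          simp only [Finset.mem_Ico] at hd hk
          refine (natDegree_add_le _ _).trans (max_le ?_ ?_) <;>
            refine (natDegree_C_mul_le _ _).trans ?_ <;>
              rw [natDegree_X_pow] <;>
                exact Nat.pow_le_pow_right (by omega) (by omega)
    have hco : B.coeff 1 = α ^ q ^ m := by
      have hinner : ∀ d ∈ Finset.Ico 1 (m + 1),
          (Polynomial.C (algebraMap Fq E (c (m + d))) *
            ∑ k ∈ Finset.Ico (m - d) m,
              (Polynomial.C (α ^ q ^ (k + d)) * X ^ q ^ k
                + Polynomial.C (α ^ q ^ k) * X ^ q ^ (k + d))).coeff 1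
          = if d = m then α ^ q ^ m else 0 := by
        intro d hd
        simp only [Finset.mem_Ico] at hd
        rw [coeff_C_mul, finset_sum_coeff]
        have hterm : ∀ k ∈ Finset.Ico (m - d) m,
            (Polynomial.C (α ^ q ^ (k + d)) * X ^ q ^ k
              + Polynomial.C (α ^ q ^ k) * X ^ q ^ (k + d)).coeff 1
            = if k = 0 then α ^ q ^ d else 0 := by
          intro k hk
          simp only [Finset.mem_Ico] at hk
          have hkd : ¬ (1 = q ^ (k + d)) := by
            have := hpowlt 0 (k + d) (by omega)
            simp only [pow_zero] at this
            omega
          rw [coeff_add, coeff_C_mul, coeff_C_mul, coeff_X_pow, coeff_X_pow, if_neg hkd]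
          by_cases hk0 : k = 0
          · subst hk0
            rw [if_pos rfl, pow_zero]
            rw [if_pos rfl]
            simp
          · have hkq : ¬ (1 = q ^ k) := by
              have := hpowlt 0 k (by omega)
              simp only [pow_zero] at this
              omega
            rw [if_neg hkq, if_neg hk0]
            simp
        rw [Finset.sum_congr rfl hterm]
        by_cases hdm : d = m
        · rw [if_pos hdm, hdm]
          rw [Finset.sum_ite_eq' (Finset.Ico (m - m) m) 0 (fun _ => α ^ q ^ m)]
          rw [if_pos (by simp only [Finset.mem_Ico]; omega)]
          rw [show m + m = 2 * m from by omega, hc2m, map_one, one_mul]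
        · rw [if_neg hdm]
          rw [Finset.sum_eq_zero, mul_zero]
          intro k hk
          simp only [Finset.mem_Ico] at hk
          rw [if_neg (by omega)]
      have h1 : ¬ (1 = q ^ (m - 1)) := by
        have := hpowlt 0 (m - 1) (by omega)
        simp only [pow_zero] at this
        omega
      have h2 : ¬ (1 = q ^ m) := by
        have := hpowlt 0 m (by omega)
        simp only [pow_zero] at this
        omega
      rw [hB, coeff_add, coeff_add, finset_sum_coeff,
        coeff_C_mul, coeff_X_pow, if_neg h1,
        coeff_C_mul, coeff_X_pow, if_neg h2,
        Finset.sum_congr rfl hinner,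
        Finset.sum_ite_eq' (Finset.Ico 1 (m + 1)) m (fun _ => α ^ q ^ m),
        if_pos (by simp only [Finset.mem_Ico]; omega)]
      ring
    have hzero : α ^ q ^ m = 0 := by
      rw [← hco, hBzero, coeff_zero]
    have hqm : q ^ m ≠ 0 := by
      have := hpowlt 0 m (by omega)
      omega
    exact pow_eq_zero_iff hqm |>.mp hzero
  -- Galois invariance
  have hGal : ∀ (σ : E ≃ₐ[RatFunc Fq] E), ∀ α ∈ V, Q (σ α) = Q α := by
    intro σ α hα
    obtain ⟨a, ha⟩ := hQval α hα
    have hσf : σ (Polynomial.aeval α f) = Polynomial.aeval (σ α) f := by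
      simpa using (Polynomial.aeval_algHom_apply
        ((σ : E →ₐ[RatFunc Fq] E).restrictScalars Fq) α f).symm
    have h1 : σ (Q α) = Q (σ α) := by
      rw [hQ, hQ, map_add, map_mul, map_pow, AlgEquiv.commutes, hσf]
    have h2 : σ (Q α) = Q α := by
      rw [← ha, IsScalarTower.algebraMap_apply Fq (RatFunc Fq) E, AlgEquiv.commutes]
    rw [← h1, h2]
  refine ⟨hQval, fun a α _ => hsc a α, fun α _ β _ γ _ => hadd α β γ,
    fun a α _ β _ => hsmul a α β, fun α _ β _ => hsymm α β, ?_, ?_, hnd, hGal⟩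
  · -- Cf takes values in F_q on V
    intro α hα β hβ
    obtain ⟨a, ha⟩ := hQval _ (V.add_mem hα hβ)
    obtain ⟨b, hb⟩ := hQval α hα
    obtain ⟨d, hd⟩ := hQval β hβ
    exact ⟨a - b - d, by rw [map_sub, map_sub, ha, hb, hd, hCf]⟩
  · -- alternating when q is even
    intro hev α hα
    have hp2 : p = 2 := by
      rcases hev with ⟨r, hr⟩
      have h2q : (2 : ℕ) ∣ q := ⟨r, by omega⟩
      have : (2 : ℕ) ∣ p ^ (n : ℕ) := hqpn ▸ h2q
      have := (Nat.Prime.dvd_of_dvd_pow (p := 2) Nat.prime_two this)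
      exact ((Nat.prime_dvd_prime_iff_eq Nat.prime_two hp).mp this).symm
    haveI : CharP E 2 := hp2 ▸ hCE
    have hαα : α + α = 0 := CharTwo.add_self_eq_zero α
    have hQ0 : Q 0 = 0 := by
      rw [hQ]
      rw [zero_pow (by positivity), mul_zero, zero_add]
      rw [aeval_def, eval₂_at_zero, Polynomial.coeff_zero_eq_eval_zero, hf0, map_zero]
    rw [hCf, hαα, hQ0]
    have : Q α + Q α = 0 := CharTwo.add_self_eq_zero _
    linear_combination -this
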